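/- arXiv:1704.04647 — 5 statements merged into one kernel-verified Lean document; each statement's English description precedes it below -/
import Mathlib

section
/- Let F be a functor on sets and Γ a relator for F. Then Γ ∩ Γᶜ (defined pointwise by (Γ ∩ Γᶜ)(R) = Γ R ∩ Γᶜ R, where Γᶜ(R) = (Γ(Rᶜ))ᶜ) is the greatest conversive relator for F contained in Γ with respect to the pointwise order: it is a relator, it is conversive, (Γ ∩ Γᶜ)(R) ⊆ Γ R for all R, and any conversive relator Δ for F with Δ R ⊆ Γ R for all R satisfies Δ R ⊆ (Γ ∩ Γᶜ)(R) for all R. -/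
/-- A relator for a functor `F` on sets (with action on functions `Fmap`):
a map sending each relation `R ⊆ α × β` to a relation `Γ R ⊆ F α × F β`,
satisfying conditions (Rel-1)–(Rel-4). -/
structure SetRelator (F : Type → Type) (Fmap : ∀ {α β : Type}, (α → β) → F α → F β) where
  rel : ∀ {α β : Type}, (α → β → Prop) → F α → F β → Prop
  /-- (Rel-1): the identity relation on `F α` is contained in `Γ` of the identity. -/
  rel1 : ∀ {α : Type} (t : F α), rel (fun x y => x = y) t t
  /-- (Rel-2): `Γ S ∘ Γ R ⊆ Γ (S ∘ R)`. -/
  rel2 : ∀ {α β γ : Type} {R : α → β → Prop} {S : β → γ → Prop} {a : F α} {b : F β} {c : F γ},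
      rel R a b → rel S b c → rel (fun x z => ∃ y, R x y ∧ S y z) a c
  /-- (Rel-3): `Γ ((f × g)⁻¹ R) = (F f × F g)⁻¹ (Γ R)`. -/
  rel3 : ∀ {α β α' β' : Type} (f : α' → α) (g : β' → β) (R : α → β → Prop)
      (a : F α') (b : F β'),
      rel (fun z w => R (f z) (g w)) a b ↔ rel R (Fmap f a) (Fmap g b)
  /-- (Rel-4): monotonicity. -/
  rel4 : ∀ {α β : Type} {R S : α → β → Prop}, (∀ x y, R x y → S x y) →
      ∀ {a : F α} {b : F β}, rel R a b → rel S a b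

/-- A relator is conversive if `Γ (Rᶜ) = (Γ R)ᶜ` for every relation `R`. -/
def SetRelator.Conversive {F : Type → Type} {Fmap : ∀ {α β : Type}, (α → β) → F α → F β}
    (Γ : SetRelator F Fmap) : Prop :=
  ∀ {α β : Type} (R : α → β → Prop) (a : F α) (b : F β),
    Γ.rel (fun y x => R x y) b a ↔ Γ.rel R a b

/-- The relator `Γ ∩ Γᶜ`: `(Γ ∩ Γᶜ)(R) = Γ R ∩ (Γ (Rᶜ))ᶜ`. -/
def interConv {F : Type → Type} {Fmap : ∀ {α β : Type}, (α → β) → F α → F β}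
    (Γ : SetRelator F Fmap) {α β : Type} (R : α → β → Prop) (a : F α) (b : F β) : Prop :=
  Γ.rel R a b ∧ Γ.rel (fun y x => R x y) b a

/-- `Γ ∩ Γᶜ` is the greatest conversive relator contained in `Γ`:
it is a relator (satisfies (Rel-1)–(Rel-4)), it is conversive, it is contained
in `Γ`, and any conversive relator `Δ` contained in `Γ` is contained in it. -/
theorem interConv_greatest_conversive_relator
    (F : Type → Type) (Fmap : ∀ {α β : Type}, (α → β) → F α → F β)
    (Γ : SetRelator F Fmap) :
    (∀ (α : Type) (t : F α), interConv Γ (fun x y : α => x = y) t t) ∧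
    (∀ (α β γ : Type) (R : α → β → Prop) (S : β → γ → Prop)
        (a : F α) (b : F β) (c : F γ),
        interConv Γ R a b → interConv Γ S b c →
        interConv Γ (fun x z => ∃ y, R x y ∧ S y z) a c) ∧
    (∀ (α β α' β' : Type) (f : α' → α) (g : β' → β) (R : α → β → Prop)
        (a : F α') (b : F β'),
        interConv Γ (fun z w => R (f z) (g w)) a b ↔
          interConv Γ R (Fmap f a) (Fmap g b)) ∧
    (∀ (α β : Type) (R S : α → β → Prop), (∀ x y, R x y → S x y) →
        ∀ (a : F α) (b : F β), interConv Γ R a b → interConv Γ S a b) ∧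
    (∀ (α β : Type) (R : α → β → Prop) (a : F α) (b : F β),
        interConv Γ (fun (y : β) (x : α) => R x y) b a ↔ interConv Γ R a b) ∧
    (∀ (α β : Type) (R : α → β → Prop) (a : F α) (b : F β),
        interConv Γ R a b → Γ.rel R a b) ∧
    (∀ Δ : SetRelator F Fmap, Δ.Conversive →
        (∀ (α β : Type) (R : α → β → Prop) (a : F α) (b : F β),
          Δ.rel R a b → Γ.rel R a b) →
        ∀ (α β : Type) (R : α → β → Prop) (a : F α) (b : F β),
          Δ.rel R a b → interConv Γ R a b) := by
  refine ⟨?_, ?_, ?_, ?_, ?_, ?_, ?_⟩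
  · intro α t
    exact ⟨Γ.rel1 t, Γ.rel4 (fun x y h => h.symm) (Γ.rel1 t)⟩
  · intro α β γ R S a b c hR hS
    refine ⟨Γ.rel2 hR.1 hS.1, ?_⟩
    exact Γ.rel4 (fun z x ⟨y, hy1, hy2⟩ => ⟨y, hy2, hy1⟩) (Γ.rel2 hS.2 hR.2)
  · intro α β α' β' f g R a b
    constructor
    · rintro ⟨h1, h2⟩
      exact ⟨(Γ.rel3 f g R a b).1 h1, (Γ.rel3 g f (fun y x => R x y) b a).1 h2⟩
    · rintro ⟨h1, h2⟩
      exact ⟨(Γ.rel3 f g R a b).2 h1, (Γ.rel3 g f (fun y x => R x y) b a).2 h2⟩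
  · intro α β R S hRS a b h
    exact ⟨Γ.rel4 hRS h.1, Γ.rel4 (fun y x => hRS x y) h.2⟩
  · intro α β R a b
    exact ⟨fun h => ⟨h.2, h.1⟩, fun h => ⟨h.2, h.1⟩⟩
  · intro α β R a b h
    exact h.1
  · intro Δ hconv hsub α β R a b h
    exact ⟨hsub _ _ _ _ _ h, hsub _ _ _ _ _ ((hconv R a b).2 h)⟩
end

section
/- Let F be a functor on sets, Γ a relator for F, and γ_X : X → F X an F-coalgebra. Then Γ-bisimilarity on X, defined as (Γ ∩ Γᶜ)-similarity (the largest (Γ ∩ Γᶜ)-simulation), is an equivalence relation: reflexive, symmetric, and transitive. -/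
/-- A `Γ`-bisimulation on an `F`-coalgebra `γX`, i.e., a `(Γ ∩ Γᶜ)`-simulation. -/
def IsGammaBisim {F : Type → Type} {Fmap : ∀ {α β : Type}, (α → β) → F α → F β}
    (Γ : SetRelator F Fmap) {X : Type} (γX : X → F X) (R : X → X → Prop) : Prop :=
  ∀ x y, R x y → Γ.rel R (γX x) (γX y) ∧ Γ.rel (fun b a => R a b) (γX y) (γX x)

/-- `Γ`-bisimilarity: the largest `(Γ ∩ Γᶜ)`-simulation. -/
def GammaBisimilarity {F : Type → Type} {Fmap : ∀ {α β : Type}, (α → β) → F α → F β}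
    (Γ : SetRelator F Fmap) {X : Type} (γX : X → F X) : X → X → Prop :=
  fun x y => ∃ R : X → X → Prop, IsGammaBisim Γ γX R ∧ R x y

/-- `Γ`-bisimilarity, defined as `(Γ ∩ Γᶜ)`-similarity, is an equivalence
relation: reflexive, symmetric and transitive. -/
theorem gammaBisimilarity_equivalence
    (F : Type → Type) (Fmap : ∀ {α β : Type}, (α → β) → F α → F β)
    (Γ : SetRelator F Fmap) (X : Type) (γX : X → F X) :
    Equivalence (GammaBisimilarity Γ γX) := by
  constructor
  · intro x
    refine ⟨Eq, ?_, rfl⟩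
    intro a b hab
    subst hab
    exact ⟨Γ.rel1 _, Γ.rel4 (fun x y h => h.symm) (Γ.rel1 _)⟩
  · rintro x y ⟨R, hR, hxy⟩
    refine ⟨fun a b => R b a, ?_, hxy⟩
    intro a b hab
    exact ⟨(hR b a hab).2, (hR b a hab).1⟩
  · rintro x y z ⟨R, hR, hxy⟩ ⟨S, hS, hyz⟩
    refine ⟨fun a c => ∃ b, R a b ∧ S b c, ?_, y, hxy, hyz⟩
    rintro a c ⟨b, hab, hbc⟩
    refine ⟨Γ.rel2 (hR a b hab).1 (hS b c hbc).1, ?_⟩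
    exact Γ.rel4 (fun u v ⟨w, h1, h2⟩ => ⟨w, h2, h1⟩)
      (Γ.rel2 (hS b c hbc).2 (hR a b hab).2)
end

section
/- Let T be a functor on sets and Γ a relator for T. Let an applicative transition system be given by sets X (terms) and Y (values), an evaluation function ε : X → T Y, and an application function · : Y → Y → X. Define the monotone operator B_Γ on pairs (R_X, R_Y) of relations on X and on Y by B_Γ(R_X) = {(x,x') | ε(x) (Γ R_Y) ε(x')} and B_Γ(R_Y) = {(y,y') | ∀ w ∈ Y, (y · w) R_X (y' · w)}, and let applicative Γ-similarity be its greatest fixed point. Then: (1) applicative Γ-similarity is a preorder (each component is reflexive and transitive); (2) if Γ is conversive, applicative Γ-similarity is an equivalence relation in each component. -/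
/-- An applicative `Γ`-simulation on an applicative transition system with
terms `X`, values `Y`, evaluation `ε : X → T Y` and application
`app : Y → Y → X`: a pair `(RX, RY)` that is a post-fixed point of the
monotone operator `B_Γ`. -/
def IsAppSim {T : Type → Type} {Tmap : ∀ {α β : Type}, (α → β) → T α → T β}
    (Γ : SetRelator T Tmap) {X Y : Type} (ε : X → T Y) (app : Y → Y → X)
    (RX : X → X → Prop) (RY : Y → Y → Prop) : Prop :=
  (∀ x x', RX x x' → Γ.rel RY (ε x) (ε x')) ∧
  (∀ y y', RY y y' → ∀ w : Y, RX (app y w) (app y' w))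

/-- The term component of applicative `Γ`-similarity (the greatest fixed point
of `B_Γ`, i.e., the union of all applicative `Γ`-simulations). -/
def AppSimT {T : Type → Type} {Tmap : ∀ {α β : Type}, (α → β) → T α → T β}
    (Γ : SetRelator T Tmap) {X Y : Type} (ε : X → T Y) (app : Y → Y → X) :
    X → X → Prop :=
  fun x x' => ∃ (RX : X → X → Prop) (RY : Y → Y → Prop),
    IsAppSim Γ ε app RX RY ∧ RX x x'

/-- The value component of applicative `Γ`-similarity. -/
def AppSimV {T : Type → Type} {Tmap : ∀ {α β : Type}, (α → β) → T α → T β}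
    (Γ : SetRelator T Tmap) {X Y : Type} (ε : X → T Y) (app : Y → Y → X) :
    Y → Y → Prop :=
  fun y y' => ∃ (RX : X → X → Prop) (RY : Y → Y → Prop),
    IsAppSim Γ ε app RX RY ∧ RY y y'

/-- (1) Applicative `Γ`-similarity is a preorder (both components are reflexive
and transitive); (2) if `Γ` is conversive, both components are equivalence
relations. -/
theorem applicative_similarity_preorder_and_equivalence
    (T : Type → Type) (Tmap : ∀ {α β : Type}, (α → β) → T α → T β)
    (Γ : SetRelator T Tmap) (X Y : Type) (ε : X → T Y) (app : Y → Y → X) :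
    (Reflexive (AppSimT Γ ε app) ∧ Transitive (AppSimT Γ ε app) ∧
     Reflexive (AppSimV Γ ε app) ∧ Transitive (AppSimV Γ ε app)) ∧
    (Γ.Conversive →
      Equivalence (AppSimT Γ ε app) ∧ Equivalence (AppSimV Γ ε app)) := by
  -- identity simulation
  have hid : IsAppSim Γ ε app (fun x x' => x = x') (fun y y' => y = y') := by
    constructor
    · rintro x x' rfl; exact Γ.rel1 (ε x)
    · rintro y y' rfl w; rfl
  have hreflT : Reflexive (AppSimT Γ ε app) := fun x => ⟨_, _, hid, rfl⟩
  have hreflV : Reflexive (AppSimV Γ ε app) := fun y => ⟨_, _, hid, rfl⟩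
  -- composition of simulations
  have hcomp : ∀ {RX RY SX SY}, IsAppSim Γ ε app RX RY → IsAppSim Γ ε app SX SY →
      IsAppSim Γ ε app (fun x z => ∃ y, RX x y ∧ SX y z)
        (fun x z => ∃ y, RY x y ∧ SY y z) := by
    rintro RX RY SX SY ⟨h1, h2⟩ ⟨h3, h4⟩
    constructor
    · rintro x z ⟨y, hxy, hyz⟩
      exact Γ.rel2 (h1 x y hxy) (h3 y z hyz)
    · rintro y y' ⟨z, hyz, hzy'⟩ w
      exact ⟨app z w, h2 y z hyz w, h4 z y' hzy' w⟩
  have htransT : Transitive (AppSimT Γ ε app) := by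
    rintro a b c ⟨RX, RY, hR, hab⟩ ⟨SX, SY, hS, hbc⟩
    exact ⟨_, _, hcomp hR hS, b, hab, hbc⟩
  have htransV : Transitive (AppSimV Γ ε app) := by
    rintro a b c ⟨RX, RY, hR, hab⟩ ⟨SX, SY, hS, hbc⟩
    exact ⟨_, _, hcomp hR hS, b, hab, hbc⟩
  refine ⟨⟨hreflT, htransT, hreflV, htransV⟩, fun hc => ?_⟩
  have hconv : ∀ {RX RY}, IsAppSim Γ ε app RX RY →
      IsAppSim Γ ε app (fun x x' => RX x' x) (fun y y' => RY y' y) := by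
    rintro RX RY ⟨h1, h2⟩
    constructor
    · intro x x' hx
      exact (hc (fun y y' => RY y' y) (ε x) (ε x')).mp (h1 x' x hx)
    · intro y y' hy w
      exact h2 y' y hy w
  have hsymT : ∀ {a b}, AppSimT Γ ε app a b → AppSimT Γ ε app b a := by
    rintro a b ⟨RX, RY, hR, hab⟩
    exact ⟨_, _, hconv hR, hab⟩
  have hsymV : ∀ {a b}, AppSimV Γ ε app a b → AppSimV Γ ε app b a := by
    rintro a b ⟨RX, RY, hR, hab⟩
    exact ⟨_, _, hconv hR, hab⟩
  exact ⟨⟨hreflT, hsymT, @htransT⟩, ⟨hreflV, hsymV, @htransV⟩⟩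
end

section
/- Let μ be a subdistribution on X, ν a subdistribution on Y, and R ⊆ X × Y a relation such that for every subset U ⊆ X, μ(U) ≤ ν(R(U)), where μ(U) = ∑'_{x ∈ U} μ(x) and R(U) = {y | ∃ x ∈ U, x R y}. Let f : X → D(Z), g : Y → D(W), and S ⊆ Z × W be such that whenever x R y, for every subset A ⊆ Z, (f x)(A) ≤ (g y)(S(A)). Then for every subset A ⊆ Z, (μ >>= f)(A) ≤ (ν >>= g)(S(A)), where (μ >>= f)(z) = ∑'_{x} μ(x) · f(x)(z). In other words, the probabilistic relator Γ_D, defined by μ (Γ_D R) ν iff ∀ U ⊆ X, μ(U) ≤ ν(R(U)), satisfies the Lax-Bind condition for the subdistribution monad. -/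
open scoped ENNReal
open MeasureTheory Set

/-- The mass that `μ` assigns to a subset `U`: `μ(U) = ∑' x ∈ U, μ x`. -/
noncomputable def mass {X : Type} (μ : X → ℝ≥0∞) (U : Set X) : ℝ≥0∞ :=
  ∑' x : U, μ x

/-- The relational image `R(U) = {y | ∃ x ∈ U, x R y}`. -/
def relImg {X Y : Type} (R : X → Y → Prop) (U : Set X) : Set Y :=
  {y | ∃ x ∈ U, R x y}

/-- Bind of subdistributions: `(μ >>= f)(z) = ∑' x, μ x * f x z`. -/
noncomputable def bindD {X Z : Type} (μ : X → ℝ≥0∞) (f : X → Z → ℝ≥0∞) : Z → ℝ≥0∞ :=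
  fun z => ∑' x, μ x * f x z

lemma mass_eq_tsum_indicator {X : Type} (μ : X → ℝ≥0∞) (U : Set X) :
    mass μ U = ∑' x, U.indicator μ x := by
  rw [mass, tsum_subtype]

lemma mass_mono {X : Type} (μ : X → ℝ≥0∞) {U V : Set X} (h : U ⊆ V) :
    mass μ U ≤ mass μ V := by
  rw [mass_eq_tsum_indicator, mass_eq_tsum_indicator]
  exact ENNReal.tsum_le_tsum fun x =>
    Set.indicator_le_indicator_of_subset h (fun _ => zero_le) x

/-- Core monotonicity lemma via the layer cake formula. -/
lemma core_lemma {X Y : Type} (μ : X → ℝ≥0∞) (ν : Y → ℝ≥0∞) (R : X → Y → Prop)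
    (hR : ∀ U : Set X, mass μ U ≤ mass ν (relImg R U))
    (a : X → ℝ≥0∞) (b : Y → ℝ≥0∞) (ha : ∀ x, a x ≤ 1) (hb : ∀ y, b y ≤ 1)
    (hab : ∀ x y, R x y → a x ≤ b y) :
    ∑' x, μ x * a x ≤ ∑' y, ν y * b y := by
  letI : MeasurableSpace X := ⊤
  letI : MeasurableSpace Y := ⊤
  have hmX : ∀ s : Set X, MeasurableSet s := fun s => trivial
  have hmY : ∀ s : Set Y, MeasurableSet s := fun s => trivial
  set M : Measure X := Measure.sum (fun x => μ x • Measure.dirac x) with hM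
  set N : Measure Y := Measure.sum (fun y => ν y • Measure.dirac y) with hN
  have hMapp : ∀ s : Set X, M s = mass μ s := by
    intro s
    rw [hM, Measure.sum_apply _ (hmX s), mass_eq_tsum_indicator]
    refine tsum_congr fun x => ?_
    rw [Measure.smul_apply, Measure.dirac_apply' _ (hmX s), smul_eq_mul]
    by_cases hx : x ∈ s <;> simp [hx]
  have hNapp : ∀ s : Set Y, N s = mass ν s := by
    intro s
    rw [hN, Measure.sum_apply _ (hmY s), mass_eq_tsum_indicator]
    refine tsum_congr fun y => ?_
    rw [Measure.smul_apply, Measure.dirac_apply' _ (hmY s), smul_eq_mul]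
    by_cases hy : y ∈ s <;> simp [hy]
  have hMint : ∀ h : X → ℝ≥0∞, ∫⁻ x, h x ∂M = ∑' x, μ x * h x := by
    intro h
    rw [hM, lintegral_sum_measure]
    refine tsum_congr fun x => ?_
    rw [lintegral_smul_measure, lintegral_dirac' _ (measurable_from_top (f := h)), smul_eq_mul]
  have hNint : ∀ h : Y → ℝ≥0∞, ∫⁻ y, h y ∂N = ∑' y, ν y * h y := by
    intro h
    rw [hN, lintegral_sum_measure]
    refine tsum_congr fun y => ?_
    rw [lintegral_smul_measure, lintegral_dirac' _ (measurable_from_top (f := h)), smul_eq_mul]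
  have haT : ∀ x, a x ≠ ⊤ := fun x => ne_top_of_le_ne_top ENNReal.one_ne_top (ha x)
  have hbT : ∀ y, b y ≠ ⊤ := fun y => ne_top_of_le_ne_top ENNReal.one_ne_top (hb y)
  have key1 : ∑' x, μ x * a x = ∫⁻ t in Set.Ioi (0:ℝ), M {x | t ≤ (a x).toReal} := by
    rw [← hMint]
    have : ∫⁻ x, a x ∂M = ∫⁻ x, ENNReal.ofReal ((a x).toReal) ∂M := by
      refine lintegral_congr fun x => ?_
      rw [ENNReal.ofReal_toReal (haT x)]
    rw [this]
    exact lintegral_eq_lintegral_meas_le M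
      (Filter.Eventually.of_forall fun x => ENNReal.toReal_nonneg)
      (measurable_from_top (f := fun x => (a x).toReal)).aemeasurable
  have key2 : ∑' y, ν y * b y = ∫⁻ t in Set.Ioi (0:ℝ), N {y | t ≤ (b y).toReal} := by
    rw [← hNint]
    have : ∫⁻ y, b y ∂N = ∫⁻ y, ENNReal.ofReal ((b y).toReal) ∂N := by
      refine lintegral_congr fun y => ?_
      rw [ENNReal.ofReal_toReal (hbT y)]
    rw [this]
    exact lintegral_eq_lintegral_meas_le N
      (Filter.Eventually.of_forall fun y => ENNReal.toReal_nonneg)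
      (measurable_from_top (f := fun y => (b y).toReal)).aemeasurable
  rw [key1, key2]
  refine lintegral_mono fun t => ?_
  rw [hMapp, hNapp]
  refine le_trans (hR _) (mass_mono ν ?_)
  rintro y ⟨x, hx, hxy⟩
  exact le_trans hx (ENNReal.toReal_mono (hbT y) (hab x y hxy))

lemma mass_bindD {X Z : Type} (μ : X → ℝ≥0∞) (f : X → Z → ℝ≥0∞) (A : Set Z) :
    mass (bindD μ f) A = ∑' x, μ x * mass (f x) A := by
  rw [mass]
  simp only [bindD]
  rw [ENNReal.tsum_comm]
  refine tsum_congr fun x => ?_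
  rw [mass]
  exact ENNReal.tsum_mul_left

lemma mass_le_tsum {X : Type} (μ : X → ℝ≥0∞) (U : Set X) :
    mass μ U ≤ ∑' x, μ x := by
  rw [mass_eq_tsum_indicator]
  exact ENNReal.tsum_le_tsum fun x => Set.indicator_le_self _ _ x

/-- The probabilistic relator `Γ_D` (`μ (Γ_D R) ν` iff `μ(U) ≤ ν(R(U))` for
every `U`) satisfies the Lax-Bind condition for the subdistribution monad. -/
theorem probabilistic_relator_lax_bind (X Y Z W : Type)
    (μ : X → ℝ≥0∞) (hμ : (∑' x, μ x) ≤ 1)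
    (ν : Y → ℝ≥0∞) (hν : (∑' y, ν y) ≤ 1)
    (R : X → Y → Prop)
    (hR : ∀ U : Set X, mass μ U ≤ mass ν (relImg R U))
    (f : X → Z → ℝ≥0∞) (hf : ∀ x, (∑' z, f x z) ≤ 1)
    (g : Y → W → ℝ≥0∞) (hg : ∀ y, (∑' w, g y w) ≤ 1)
    (S : Z → W → Prop)
    (hfg : ∀ x y, R x y → ∀ A : Set Z, mass (f x) A ≤ mass (g y) (relImg S A)) :
    ∀ A : Set Z, mass (bindD μ f) A ≤ mass (bindD ν g) (relImg S A) := by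
  intro A
  rw [mass_bindD, mass_bindD]
  exact core_lemma μ ν R hR (fun x => mass (f x) A)
    (fun y => mass (g y) (relImg S A))
    (fun x => le_trans (mass_le_tsum _ _) (hf x))
    (fun y => le_trans (mass_le_tsum _ _) (hg y))
    (fun x y hxy => hfg x y hxy A)
end

section
/- The probabilistic relator Γ_D is inductive: for any relation R ⊆ X × Y, (1) the zero subdistribution 0 on X satisfies 0 (Γ_D R) ν for every subdistribution ν on Y; (2) if (μ_n)_{n<ω} is a pointwise monotone sequence of subdistributions on X with μ_n (Γ_D R) ν for every n, then the pointwise supremum ⨆_n μ_n satisfies (⨆_n μ_n) (Γ_D R) ν. -/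
open scoped ENNReal

/-- The probabilistic relator `Γ_D`:
`μ (Γ_D R) ν` iff `μ(U) ≤ ν(R(U))` for every subset `U`. -/
def GammaD {X Y : Type} (R : X → Y → Prop) (μ : X → ℝ≥0∞) (ν : Y → ℝ≥0∞) : Prop :=
  ∀ U : Set X, mass μ U ≤ mass ν (relImg R U)

lemma tsum_iSup_mono {ι : Type*} {f : ℕ → ι → ℝ≥0∞} (h : ∀ n, f n ≤ f (n + 1)) :
    ∑' i, ⨆ n, f n i = ⨆ n, ∑' i, f n i := by
  have hmono : Monotone f := monotone_nat_of_le_succ h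
  simp_rw [ENNReal.tsum_eq_iSup_sum]
  rw [iSup_comm]
  congr 1
  ext s
  exact ENNReal.finsetSum_iSup_of_monotone fun i m n hmn => hmono hmn i

/-- The probabilistic relator `Γ_D` is inductive: (1) the zero subdistribution
is `Γ_D R`-below every subdistribution; (2) `Γ_D R` is closed under pointwise
suprema of pointwise monotone sequences of subdistributions on the left. -/
theorem probabilistic_relator_inductive (X Y : Type) (R : X → Y → Prop) :
    (∀ ν : Y → ℝ≥0∞, (∑' y, ν y) ≤ 1 → GammaD R (fun _ => 0) ν) ∧
    (∀ μ : ℕ → X → ℝ≥0∞, (∀ n, μ n ≤ μ (n + 1)) → (∀ n, (∑' x, μ n x) ≤ 1) →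
      ∀ ν : Y → ℝ≥0∞, (∑' y, ν y) ≤ 1 →
      (∀ n, GammaD R (μ n) ν) →
      GammaD R (fun x => ⨆ n, μ n x) ν) := by
  constructor
  · intro ν _ U
    simp [mass]
  · intro μ hmono _ ν _ hg U
    have : mass (fun x => ⨆ n, μ n x) U = ⨆ n, mass (μ n) U := by
      unfold mass
      exact tsum_iSup_mono fun n x => hmono n x
    rw [this]
    exact iSup_le fun n => hg n U
end
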